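/- Every continuous supermixing map on a compact Hausdorff space is surjective. -/
import Mathlib

theorem stmt9 {X : Type*} [TopologicalSpace X] [CompactSpace X] [T2Space X] (f : X → X)
    (hcont : Continuous f)
    (hf : ∀ U : Set X, IsOpen U → U.Nonempty → Dense (⋃ i : ℕ, ⋂ n ≥ i, f^[n] '' U)) :
    Function.Surjective f := by
  rcases isEmpty_or_nonempty X with h | h
  · exact fun x => (h.false x).elim
  have hclosed : IsClosed (Set.range f) := (isCompact_range hcont).isClosed
  have hd := hf Set.univ isOpen_univ Set.univ_nonempty
  have hsub : (⋃ i : ℕ, ⋂ n ≥ i, f^[n] '' Set.univ) ⊆ Set.range f := by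
    intro x hx
    simp only [Set.mem_iUnion, Set.mem_iInter] at hx
    obtain ⟨i, hi⟩ := hx
    obtain ⟨y, -, hy⟩ := hi (i + 1) (Nat.le_succ i)
    rw [Function.iterate_succ_apply'] at hy
    exact ⟨f^[i] y, hy⟩
  have hdr : Dense (Set.range f) := hd.mono hsub
  intro x
  have hx : x ∈ closure (Set.range f) := hdr x
  rw [hclosed.closure_eq] at hx
  exact hx
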